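/- Let ι be a finite index set, and for each i ∈ ι let (X i, μ i) be a measurable space equipped with a finite measure. Let F be a decomposable sum-product expression over ℝ≥0∞ in these variables, with every leaf function φ : X i → ℝ≥0∞ measurable. Define Z(F) ∈ ℝ≥0∞ recursively: Z of a constant leaf c is c; Z of a leaf (i, φ) is ∫⁻ φ dμ i; Z of a Product node is the product of the Z-values of its children; Z of a Sum node v with children G₁, …, G_m is ∑_k (∏_{i ∈ scope(v) \ scope(G_k)} μ i (univ)) * Z(G_k). Then ∫⁻ (eval F) d(Measure.pi μ) = (∏_{i ∈ ι \ scope(F)} μ i (univ)) * Z(F). -/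

import Mathlib

open Finset MeasureTheory ENNReal

/-- A sum-product expression (SPF) over a commutative semiring `R` in variables
indexed by `ι` with domains `X i`. -/
inductive SPF (R : Type) (ι : Type) (X : ι → Type) where
  | const : R → SPF R ι X
  | leaf : (i : ι) → (X i → R) → SPF R ι X
  | sum : List (SPF R ι X) → SPF R ι X
  | prod : List (SPF R ι X) → SPF R ι X

namespace SPF

variable {R : Type} [CommSemiring R] {ι : Type} [DecidableEq ι] {X : ι → Type}

/-- Evaluation of an SPF at a full assignment. -/
def eval : SPF R ι X → ((i : ι) → X i) → R
  | .const c, _ => c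
  | .leaf i φ, x => φ (x i)
  | .sum l, x => (l.attach.map fun c => c.1.eval x).sum
  | .prod l, x => (l.attach.map fun c => c.1.eval x).prod
decreasing_by all_goals (simp_wf; have := List.sizeOf_lt_of_mem c.2; omega)

/-- The scope of an SPF: the set of variable indices appearing in its leaves. -/
def scope : SPF R ι X → Finset ι
  | .const _ => ∅
  | .leaf i _ => {i}
  | .sum l => (l.attach.map fun c => c.1.scope).foldr (· ∪ ·) ∅
  | .prod l => (l.attach.map fun c => c.1.scope).foldr (· ∪ ·) ∅
decreasing_by all_goals (simp_wf; have := List.sizeOf_lt_of_mem c.2; omega)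

/-- An SPF is decomposable iff the children of every Product node have
pairwise disjoint scopes. -/
inductive Decomposable : SPF R ι X → Prop
  | const (c : R) : Decomposable (.const c)
  | leaf (i : ι) (φ : X i → R) : Decomposable (.leaf i φ)
  | sum {l : List (SPF R ι X)} :
      (∀ G ∈ l, Decomposable G) → Decomposable (.sum l)
  | prod {l : List (SPF R ι X)} :
      (∀ G ∈ l, Decomposable G) →
      l.Pairwise (fun G H => Disjoint G.scope H.scope) →
      Decomposable (.prod l)

/-- All leaf functions of an SPF over `ℝ≥0∞` are measurable. -/
inductive MeasurableLeaves [∀ i, MeasurableSpace (X i)] : SPF ℝ≥0∞ ι X → Prop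
  | const (c : ℝ≥0∞) : MeasurableLeaves (.const c)
  | leaf (i : ι) (φ : X i → ℝ≥0∞) : Measurable φ → MeasurableLeaves (.leaf i φ)
  | sum {l : List (SPF ℝ≥0∞ ι X)} :
      (∀ G ∈ l, MeasurableLeaves G) → MeasurableLeaves (.sum l)
  | prod {l : List (SPF ℝ≥0∞ ι X)} :
      (∀ G ∈ l, MeasurableLeaves G) → MeasurableLeaves (.prod l)

/-- The bottom-up integration pass `Z`: a constant leaf integrates to itself,
a leaf `(i, φ)` to `∫⁻ φ dμ i`, a Product node to the product of its children's
values, and a Sum node to the sum of its children's values, each multiplied by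
the total measure of the domain of the variables in the node's scope missing
from that child's scope (the factor `⊕_{X i} 1 = μ i univ`). -/
noncomputable def Zint [∀ i, MeasurableSpace (X i)]
    (μ : (i : ι) → Measure (X i)) : SPF ℝ≥0∞ ι X → ℝ≥0∞
  | .const c => c
  | .leaf i φ => ∫⁻ t, φ t ∂(μ i)
  | .prod l => (l.attach.map fun c => c.1.Zint μ).prod
  | .sum l => (l.attach.map fun c =>
      (∏ i ∈ (SPF.sum l).scope \ c.1.scope, μ i Set.univ) * c.1.Zint μ).sum
decreasing_by all_goals (simp_wf; have := List.sizeOf_lt_of_mem c.2; omega)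

end SPF


section Aux

open Function MeasureTheory

variable {R : Type} [CommSemiring R] {ι : Type} [DecidableEq ι] {X : ι → Type}

theorem list_mem_foldr_union {α : Type} [DecidableEq α] (L : List (Finset α)) (j : α) :
    j ∈ L.foldr (· ∪ ·) ∅ ↔ ∃ a ∈ L, j ∈ a := by
  induction L with
  | nil => simp
  | cons a L ih => simp [ih]

theorem list_subset_foldr_union {α : Type} [DecidableEq α] {L : List (Finset α)} {a : Finset α}
    (h : a ∈ L) : a ⊆ L.foldr (· ∪ ·) ∅ :=
  fun j hj => (list_mem_foldr_union L j).2 ⟨a, h, hj⟩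

theorem list_disjoint_foldr_union {α : Type} [DecidableEq α] {L : List (Finset α)} {a : Finset α}
    (h : ∀ b ∈ L, Disjoint a b) : Disjoint a (L.foldr (· ∪ ·) ∅) := by
  induction L with
  | nil => simp
  | cons b L ih =>
    simp only [List.foldr_cons, Finset.disjoint_union_right]
    exact ⟨h b (List.mem_cons_self), ih fun c hc => h c (List.mem_cons_of_mem _ hc)⟩

theorem SPF.eval_sum (l : List (SPF R ι X)) (x : (i : ι) → X i) :
    (SPF.sum l).eval x = (l.map (fun G => G.eval x)).sum := by
  rw [SPF.eval]
  exact congrArg List.sum (List.attach_map_val (l := l) (f := fun G => G.eval x))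

theorem SPF.eval_prod (l : List (SPF R ι X)) (x : (i : ι) → X i) :
    (SPF.prod l).eval x = (l.map (fun G => G.eval x)).prod := by
  rw [SPF.eval]
  exact congrArg List.prod (List.attach_map_val (l := l) (f := fun G => G.eval x))

theorem SPF.scope_sum (l : List (SPF R ι X)) :
    (SPF.sum l).scope = (l.map SPF.scope).foldr (· ∪ ·) ∅ := by
  rw [SPF.scope]
  exact congrArg (List.foldr (· ∪ ·) ∅) (List.attach_map_val (l := l) (f := SPF.scope))

theorem SPF.scope_prod (l : List (SPF R ι X)) :
    (SPF.prod l).scope = (l.map SPF.scope).foldr (· ∪ ·) ∅ := by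
  rw [SPF.scope]
  exact congrArg (List.foldr (· ∪ ·) ∅) (List.attach_map_val (l := l) (f := SPF.scope))

theorem SPF.scope_subset_sum {l : List (SPF R ι X)} {G : SPF R ι X} (h : G ∈ l) :
    G.scope ⊆ (SPF.sum l).scope := by
  rw [SPF.scope_sum]
  exact list_subset_foldr_union (List.mem_map_of_mem h)

theorem SPF.scope_prod_cons (G : SPF R ι X) (l : List (SPF R ι X)) :
    (SPF.prod (G :: l)).scope = G.scope ∪ (SPF.prod l).scope := by
  rw [SPF.scope_prod, SPF.scope_prod, List.map_cons, List.foldr_cons]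

theorem SPF.eval_congr (F : SPF R ι X) {x y : (i : ι) → X i}
    (h : ∀ i ∈ F.scope, x i = y i) : F.eval x = F.eval y := by
  match F with
  | .const c => rw [SPF.eval, SPF.eval]
  | .leaf i φ =>
    rw [SPF.eval, SPF.eval, h i (by rw [SPF.scope]; exact Finset.mem_singleton_self i)]
  | .sum l =>
    rw [SPF.eval_sum, SPF.eval_sum]
    congr 1
    refine List.map_congr_left fun G hG => SPF.eval_congr G fun i hi =>
      h i (SPF.scope_subset_sum hG hi)
  | .prod l =>
    rw [SPF.eval_prod, SPF.eval_prod]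
    congr 1
    refine List.map_congr_left fun G hG => SPF.eval_congr G fun i hi => ?_
    refine h i ?_
    rw [SPF.scope_prod]
    exact list_subset_foldr_union (List.mem_map_of_mem hG) hi
termination_by sizeOf F
decreasing_by all_goals (simp_wf; have := List.sizeOf_lt_of_mem hG; omega)

theorem measurable_list_sum_eval [∀ i, MeasurableSpace (X i)] {l : List (SPF ℝ≥0∞ ι X)}
    (h : ∀ G ∈ l, Measurable G.eval) :
    Measurable fun x => (l.map (fun G => G.eval x)).sum := by
  induction l with
  | nil => simpa using measurable_const
  | cons G l ih =>
    simp only [List.map_cons, List.sum_cons]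
    exact (h G (List.mem_cons_self)).add (ih fun H hH => h H (List.mem_cons_of_mem _ hH))

theorem measurable_list_prod_eval [∀ i, MeasurableSpace (X i)] {l : List (SPF ℝ≥0∞ ι X)}
    (h : ∀ G ∈ l, Measurable G.eval) :
    Measurable fun x => (l.map (fun G => G.eval x)).prod := by
  induction l with
  | nil => simpa using measurable_const
  | cons G l ih =>
    simp only [List.map_cons, List.prod_cons]
    exact (h G (List.mem_cons_self)).mul (ih fun H hH => h H (List.mem_cons_of_mem _ hH))

theorem SPF.measurable_eval [∀ i, MeasurableSpace (X i)] (F : SPF ℝ≥0∞ ι X)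
    (hm : F.MeasurableLeaves) : Measurable F.eval := by
  match F with
  | .const c =>
    rw [show (SPF.const c : SPF ℝ≥0∞ ι X).eval = fun _ => c from
      funext fun x => by rw [SPF.eval]]
    exact measurable_const
  | .leaf i φ =>
    cases hm with
    | leaf _ _ hφ =>
      rw [show (SPF.leaf i φ).eval = fun x => φ (x i) from
        funext fun x => by rw [SPF.eval]]
      exact hφ.comp (measurable_pi_apply i)
  | .sum l =>
    have hl : ∀ G ∈ l, G.MeasurableLeaves := by cases hm with | sum h => exact h
    have h : ∀ G ∈ l, Measurable G.eval := fun G hG => SPF.measurable_eval G (hl G hG)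
    have he : (SPF.sum l).eval = fun x => (l.map (fun G => G.eval x)).sum :=
      funext (SPF.eval_sum l)
    rw [he]
    exact measurable_list_sum_eval h
  | .prod l =>
    have hl : ∀ G ∈ l, G.MeasurableLeaves := by cases hm with | prod h => exact h
    have h : ∀ G ∈ l, Measurable G.eval := fun G hG => SPF.measurable_eval G (hl G hG)
    have he : (SPF.prod l).eval = fun x => (l.map (fun G => G.eval x)).prod :=
      funext (SPF.eval_prod l)
    rw [he]
    exact measurable_list_prod_eval h
termination_by sizeOf F
decreasing_by all_goals (simp_wf; have := List.sizeOf_lt_of_mem hG; omega)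

theorem SPF.Zint_prod [∀ i, MeasurableSpace (X i)] (μ : (i : ι) → Measure (X i))
    (l : List (SPF ℝ≥0∞ ι X)) :
    (SPF.prod l).Zint μ = (l.map (fun G => G.Zint μ)).prod := by
  rw [SPF.Zint]
  exact congrArg List.prod (List.attach_map_val (l := l) (f := fun G => G.Zint μ))

theorem SPF.Zint_sum [∀ i, MeasurableSpace (X i)] (μ : (i : ι) → Measure (X i))
    (l : List (SPF ℝ≥0∞ ι X)) :
    (SPF.sum l).Zint μ =
      (l.map (fun G =>
        (∏ i ∈ (SPF.sum l).scope \ G.scope, μ i Set.univ) * G.Zint μ)).sum := by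
  rw [SPF.Zint]
  exact congrArg List.sum (List.attach_map_val (l := l) (f := fun G =>
    (∏ i ∈ (SPF.sum l).scope \ G.scope, μ i Set.univ) * G.Zint μ))

theorem SPF.Zint_prod_cons [∀ i, MeasurableSpace (X i)] (μ : (i : ι) → Measure (X i))
    (G : SPF ℝ≥0∞ ι X) (l : List (SPF ℝ≥0∞ ι X)) :
    (SPF.prod (G :: l)).Zint μ = G.Zint μ * (SPF.prod l).Zint μ := by
  rw [SPF.Zint_prod, List.map_cons, List.prod_cons, SPF.Zint_prod]

theorem SPF.Zint_eq_zero [∀ i, MeasurableSpace (X i)] {μ : (i : ι) → Measure (X i)}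
    {j : ι} (h0 : μ j = 0) (F : SPF ℝ≥0∞ ι X) (hj : j ∈ F.scope) : F.Zint μ = 0 := by
  match F with
  | .const c => rw [SPF.scope] at hj; exact absurd hj (Finset.notMem_empty j)
  | .leaf i φ =>
    rw [SPF.scope, Finset.mem_singleton] at hj
    subst hj
    rw [SPF.Zint, h0, lintegral_zero_measure]
  | .sum l =>
    rw [SPF.Zint_sum]
    refine List.sum_eq_zero fun t ht => ?_
    rw [List.mem_map] at ht
    obtain ⟨G, hG, rfl⟩ := ht
    by_cases hjG : j ∈ G.scope
    · rw [SPF.Zint_eq_zero h0 G hjG, mul_zero]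
    · rw [Finset.prod_eq_zero (Finset.mem_sdiff.2 ⟨hj, hjG⟩) (by rw [h0]; rfl), zero_mul]
  | .prod l =>
    rw [SPF.scope_prod, list_mem_foldr_union] at hj
    obtain ⟨a, ha, hja⟩ := hj
    rw [List.mem_map] at ha
    obtain ⟨G, hG, rfl⟩ := ha
    rw [SPF.Zint_prod]
    refine List.prod_eq_zero ?_
    rw [List.mem_map]
    exact ⟨G, hG, SPF.Zint_eq_zero h0 G hja⟩
termination_by sizeOf F
decreasing_by all_goals (simp_wf; have := List.sizeOf_lt_of_mem hG; omega)

theorem lmarginal_constf [∀ i, MeasurableSpace (X i)] (μ : (i : ι) → Measure (X i))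
    [∀ i, IsFiniteMeasure (μ i)] (s : Finset ι) (c : ℝ≥0∞) :
    (∫⋯∫⁻_s, (fun _ => c) ∂μ) = fun _ => (∏ i ∈ s, μ i Set.univ) * c := by
  funext x
  rw [MeasureTheory.lmarginal]
  rw [MeasureTheory.lintegral_const, MeasureTheory.Measure.pi_univ, mul_comm]
  congr 1
  exact Finset.prod_coe_sort s (fun i => μ i Set.univ)

theorem lmarginal_list_sum_eval [∀ i, MeasurableSpace (X i)] (μ : (i : ι) → Measure (X i))
    [∀ i, IsFiniteMeasure (μ i)] {l : List (SPF ℝ≥0∞ ι X)}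
    (h : ∀ G ∈ l, Measurable G.eval) (s : Finset ι) (x : (i : ι) → X i) :
    (∫⋯∫⁻_s, (fun x => (l.map (fun G => G.eval x)).sum) ∂μ) x
      = (l.map (fun G => (∫⋯∫⁻_s, G.eval ∂μ) x)).sum := by
  induction l with
  | nil => simp [MeasureTheory.lmarginal]
  | cons G l ih =>
    simp only [List.map_cons, List.sum_cons]
    rw [← ih fun H hH => h H (List.mem_cons_of_mem _ hH)]
    rw [MeasureTheory.lmarginal, MeasureTheory.lmarginal, MeasureTheory.lmarginal]
    exact MeasureTheory.lintegral_add_left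
      ((h G (List.mem_cons_self)).comp measurable_updateFinset) _

/-- The key lemma: the marginal of a decomposable SPF over any finset containing its
scope is constant, equal to the `Z` value times the measures of the extra variables. -/
theorem SPF.key_lmarginal [∀ i, MeasurableSpace (X i)] (μ : (i : ι) → Measure (X i))
    [∀ i, IsFiniteMeasure (μ i)] (F : SPF ℝ≥0∞ ι X) (hdec : F.Decomposable)
    (hm : F.MeasurableLeaves) (s : Finset ι) (hs : F.scope ⊆ s) :
    (∫⋯∫⁻_s, F.eval ∂μ) = fun _ => (∏ i ∈ s \ F.scope, μ i Set.univ) * F.Zint μ := by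
  match F with
  | .const c =>
    have h1 : (SPF.const c : SPF ℝ≥0∞ ι X).eval = fun _ => c :=
      funext fun x => by rw [SPF.eval]
    rw [h1, lmarginal_constf, SPF.scope, SPF.Zint, Finset.sdiff_empty]
  | .leaf i φ =>
    have hφ : Measurable φ := by cases hm with | leaf _ _ h => exact h
    have hmeval : Measurable (SPF.leaf i φ).eval := SPF.measurable_eval _ hm
    have hi : i ∈ s := hs (by rw [SPF.scope]; exact Finset.mem_singleton_self i)
    have hsplit : s = (s \ {i}) ∪ {i} :=
      (Finset.sdiff_union_of_subset (Finset.singleton_subset_iff.2 hi)).symm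
    rw [hsplit, MeasureTheory.lmarginal_union μ _ hmeval Finset.sdiff_disjoint]
    rw [MeasureTheory.lmarginal_singleton]
    have h2 : (fun x => ∫⁻ t, (SPF.leaf i φ).eval (Function.update x i t) ∂μ i)
        = fun _ => ∫⁻ t, φ t ∂μ i := by
      funext x
      congr 1
      funext t
      rw [SPF.eval, Function.update_self]
    rw [h2, lmarginal_constf, SPF.scope, SPF.Zint]
    funext x
    congr 2
    ext j
    simp only [Finset.mem_sdiff, Finset.mem_union, Finset.mem_singleton]
    tauto
  | .sum l =>
    have hd : ∀ G ∈ l, G.Decomposable := by cases hdec with | sum h => exact h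
    have hml : ∀ G ∈ l, G.MeasurableLeaves := by cases hm with | sum h => exact h
    have hmev : ∀ G ∈ l, Measurable G.eval := fun G hG => G.measurable_eval (hml G hG)
    funext x
    have heval : (SPF.sum l).eval = fun x => (l.map (fun G => G.eval x)).sum :=
      funext (SPF.eval_sum l)
    rw [heval, lmarginal_list_sum_eval μ hmev s x]
    have hterm : ∀ G ∈ l, (∫⋯∫⁻_s, G.eval ∂μ) x
        = (∏ i ∈ s \ (SPF.sum l).scope, μ i Set.univ) *
          ((∏ i ∈ (SPF.sum l).scope \ G.scope, μ i Set.univ) * G.Zint μ) := by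
      intro G hG
      have h1 : G.scope ⊆ (SPF.sum l).scope := SPF.scope_subset_sum hG
      rw [SPF.key_lmarginal μ G (hd G hG) (hml G hG) s (h1.trans hs)]
      have h3 : s \ G.scope = (s \ (SPF.sum l).scope) ∪ ((SPF.sum l).scope \ G.scope) := by
        ext j
        simp only [Finset.mem_sdiff, Finset.mem_union]
        constructor
        · intro ⟨hj, hjG⟩
          by_cases hjF : j ∈ (SPF.sum l).scope
          · exact Or.inr ⟨hjF, hjG⟩
          · exact Or.inl ⟨hj, hjF⟩
        · rintro (⟨hj, hjF⟩ | ⟨hjF, hjG⟩)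
          · exact ⟨hj, fun h => hjF (h1 h)⟩
          · exact ⟨hs hjF, hjG⟩
      rw [h3, Finset.prod_union (Finset.disjoint_left.2 fun j hj hj' =>
        (Finset.mem_sdiff.1 hj).2 (Finset.mem_sdiff.1 hj').1), mul_assoc]
    rw [List.map_congr_left hterm, List.sum_map_mul_left, ← SPF.Zint_sum]
  | .prod [] =>
    have h1 : (SPF.prod ([] : List (SPF ℝ≥0∞ ι X))).eval = fun _ => 1 := by
      funext x
      rw [SPF.eval_prod]
      rfl
    rw [h1, lmarginal_constf, SPF.scope_prod, SPF.Zint_prod]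
    simp
  | .prod (G :: rest) =>
    have hd : ∀ H ∈ G :: rest, H.Decomposable := by cases hdec with | prod h _ => exact h
    have hpw : (G :: rest).Pairwise (fun A B => Disjoint A.scope B.scope) := by
      cases hdec with | prod _ h => exact h
    have hml : ∀ H ∈ G :: rest, H.MeasurableLeaves := by cases hm with | prod h => exact h
    have hdP : (SPF.prod rest).Decomposable :=
      .prod (fun H hH => hd H (List.mem_cons_of_mem _ hH)) hpw.of_cons
    have hmP : (SPF.prod rest).MeasurableLeaves :=
      .prod fun H hH => hml H (List.mem_cons_of_mem _ hH)
    have hdG : G.Decomposable := hd G (List.mem_cons_self)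
    have hmG : G.MeasurableLeaves := hml G (List.mem_cons_self)
    have hGdisj : Disjoint G.scope (SPF.prod rest).scope := by
      rw [SPF.scope_prod]
      refine list_disjoint_foldr_union fun b hb => ?_
      rw [List.mem_map] at hb
      obtain ⟨H, hH, rfl⟩ := hb
      exact (List.pairwise_cons.1 hpw).1 H hH
    have hscope : (SPF.prod (G :: rest)).scope = G.scope ∪ (SPF.prod rest).scope :=
      SPF.scope_prod_cons G rest
    have hGs : G.scope ⊆ s := fun j hj => hs (by rw [hscope]; exact Finset.mem_union_left _ hj)
    have hPs : (SPF.prod rest).scope ⊆ s := fun j hj =>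
      hs (by rw [hscope]; exact Finset.mem_union_right _ hj)
    have hmeval : Measurable (SPF.prod (G :: rest)).eval := SPF.measurable_eval _ hm
    have hPeval : Measurable (SPF.prod rest).eval := SPF.measurable_eval _ hmP
    have hGeval : Measurable G.eval := SPF.measurable_eval _ hmG
    have hsplit : s = (s \ (SPF.prod rest).scope) ∪ (SPF.prod rest).scope :=
      (Finset.sdiff_union_of_subset hPs).symm
    rw [hsplit, MeasureTheory.lmarginal_union μ _ hmeval Finset.sdiff_disjoint]
    have hevalc : (SPF.prod (G :: rest)).eval
        = fun x => G.eval x * (SPF.prod rest).eval x := by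
      funext x
      rw [SPF.eval_prod, List.map_cons, List.prod_cons, ← SPF.eval_prod]
    have hinner : (∫⋯∫⁻_(SPF.prod rest).scope, (SPF.prod (G :: rest)).eval ∂μ)
        = fun x => G.eval x * (SPF.prod rest).Zint μ := by
      funext x
      rw [hevalc, MeasureTheory.lmarginal]
      have hGconst : ∀ y, G.eval (Function.updateFinset x (SPF.prod rest).scope y)
          = G.eval x := by
        intro y
        refine SPF.eval_congr G fun i hi => ?_
        rw [Function.updateFinset]
        exact dif_neg fun hmem => Finset.disjoint_left.1 hGdisj hi hmem
      simp only [hGconst]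
      have hPm : Measurable fun y =>
          (SPF.prod rest).eval (Function.updateFinset x (SPF.prod rest).scope y) :=
        hPeval.comp measurable_updateFinset
      rw [MeasureTheory.lintegral_const_mul _ hPm]
      congr 1
      have hP := SPF.key_lmarginal μ (SPF.prod rest) hdP hmP (SPF.prod rest).scope
        (subset_refl _)
      have : (∫⋯∫⁻_(SPF.prod rest).scope, (SPF.prod rest).eval ∂μ) x
          = (∏ i ∈ (SPF.prod rest).scope \ (SPF.prod rest).scope, μ i Set.univ) *
            (SPF.prod rest).Zint μ := by rw [hP]
      rw [MeasureTheory.lmarginal] at this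
      rw [this, Finset.sdiff_self, Finset.prod_empty, one_mul]
    rw [hinner]
    have houter : (∫⋯∫⁻_(s \ (SPF.prod rest).scope),
          (fun x => G.eval x * (SPF.prod rest).Zint μ) ∂μ)
        = fun x => (∫⋯∫⁻_(s \ (SPF.prod rest).scope), G.eval ∂μ) x *
            (SPF.prod rest).Zint μ := by
      funext x
      rw [MeasureTheory.lmarginal, MeasureTheory.lmarginal]
      have hGm : Measurable fun y =>
          G.eval (Function.updateFinset x (s \ (SPF.prod rest).scope) y) :=
        hGeval.comp measurable_updateFinset
      exact MeasureTheory.lintegral_mul_const _ hGm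
    rw [houter, SPF.key_lmarginal μ G hdG hmG (s \ (SPF.prod rest).scope)
      (Finset.subset_sdiff.2 ⟨hGs, hGdisj⟩)]
    funext x
    rw [hscope, SPF.Zint_prod_cons]
    have hsd : (s \ (SPF.prod rest).scope) \ G.scope
        = s \ (G.scope ∪ (SPF.prod rest).scope) := by
      ext j
      simp only [Finset.mem_sdiff, Finset.mem_union]
      tauto
    rw [hsd, mul_assoc]
    congr 2
    ext j
    simp only [Finset.mem_sdiff, Finset.mem_union]
    tauto
termination_by sizeOf F
decreasing_by all_goals (first
  | (simp_wf; have := List.sizeOf_lt_of_mem hG; omega)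
  | (simp_wf; omega)
  | simp_wf)

end Aux

/-- Corollary 6 (every decomposable SPF of real variables can be integrated in
time linear in its size), under condition (C2) that the variable domains have
finite measure: the Lebesgue integral of a decomposable SPF over `ℝ≥0∞` with
measurable leaves, with respect to the product measure, equals its linear-time
bottom-up integration pass `Z`, times the total measure of the domains of the
variables missing from its scope. -/
theorem lintegral_decomposable_spf
    {ι : Type} [Fintype ι] [DecidableEq ι] {X : ι → Type}
    [∀ i, MeasurableSpace (X i)]
    (μ : (i : ι) → Measure (X i)) [∀ i, IsFiniteMeasure (μ i)]
    (F : SPF ℝ≥0∞ ι X) (hdec : F.Decomposable) (hm : F.MeasurableLeaves) :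
    ∫⁻ x, F.eval x ∂(Measure.pi μ) =
      (∏ i ∈ (F.scope)ᶜ, μ i Set.univ) * F.Zint μ := by
  by_cases hne : Nonempty ((i : ι) → X i)
  · obtain ⟨x⟩ := hne
    rw [MeasureTheory.lintegral_eq_lmarginal_univ x,
      F.key_lmarginal μ hdec hm Finset.univ (Finset.subset_univ _)]
    rw [Finset.compl_eq_univ_sdiff]
  · rw [not_nonempty_iff] at hne
    haveI := hne
    rw [show Measure.pi μ = 0 from (Measure.eq_zero_of_isEmpty _),
      MeasureTheory.lintegral_zero_measure]
    have : ¬ ∀ i, Nonempty (X i) := by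
      intro h
      exact hne.elim (fun i => (h i).some)
    push_neg at this
    obtain ⟨j, hj⟩ := this
    have h0 : μ j = 0 := by
      have : (Set.univ : Set (X j)) = ∅ := Set.univ_eq_empty_iff.2 hj
      exact Measure.measure_univ_eq_zero.1 (by rw [this, measure_empty])
    by_cases hjs : j ∈ F.scope
    · rw [SPF.Zint_eq_zero h0 F hjs, mul_zero]
    · rw [Finset.prod_eq_zero (Finset.mem_compl.2 hjs) (by rw [h0]; rfl), zero_mul]
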